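/- arXiv:2103.05176 — 2 statements merged into one kernel-verified Lean document; each statement's English description precedes it below -/
import Mathlib

section
/- Let (x(t))_{t≥0} and (x̄(t))_{t≥1} be real-valued random sequences such that for every t ≥ 1, x(t-1) and x̄(t) have the same distribution, and suppose there exists an almost-surely finite random time τ such that x(t) = x̄(t) for all t ≥ τ. Assume h is a bounded measurable function, E[h(x(t))] converges to a limit L as t → ∞, and the interchange of summation and expectation is valid (e.g., E[∑_{t=k+1}^{τ-1} |h(x(t)) - h(x̄(t))|] < ∞). Then for every fixed k ≥ 0, the estimator ĥ_k = h(x(k)) + ∑_{t=k+1}^{τ-1} [h(x(t)) - h(x̄(t))] satisfies E[ĥ_k] = L. -/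
open MeasureTheory Filter

/-- Glynn–Rhee debiasing identity: for coupled chains with matched marginals
(`x (t-1) ~ x̄ t`) that meet at the a.s. finite random time `τ`, and a bounded
measurable `h` with `E[h(x t)] → L`, assuming the interchange of summation and
expectation is valid, the estimator
`ĥ_k = h(x k) + ∑_{t=k+1}^{τ-1} (h(x t) - h(x̄ t))` has expectation `L`. -/
theorem stmt0 {Ω : Type*} [MeasurableSpace Ω] (μ : Measure Ω) [IsProbabilityMeasure μ]
    (x xb : ℕ → Ω → ℝ) (τ : Ω → ℕ) (h : ℝ → ℝ) (L C : ℝ)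
    (hxm : ∀ t, Measurable (x t)) (hxbm : ∀ t, Measurable (xb t)) (hτm : Measurable τ)
    (hmeas : Measurable h) (hbd : ∀ r : ℝ, |h r| ≤ C)
    (hid : ∀ t : ℕ, 1 ≤ t → μ.map (x (t - 1)) = μ.map (xb t))
    (hmeet : ∀ ω, ∀ t, τ ω ≤ t → x t ω = xb t ω)
    (hconv : Tendsto (fun t => ∫ ω, h (x t ω) ∂μ) atTop (nhds L))
    (k : ℕ)
    (habs : Integrable
      (fun ω => ∑ t ∈ Finset.Ico (k + 1) (τ ω), |h (x t ω) - h (xb t ω)|) μ)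
    (hint : Integrable
      (fun ω => h (x k ω) + ∑ t ∈ Finset.Ico (k + 1) (τ ω), (h (x t ω) - h (xb t ω))) μ)
    (hswap : ∫ ω, (∑ t ∈ Finset.Ico (k + 1) (τ ω), (h (x t ω) - h (xb t ω))) ∂μ
      = ∑' t : ℕ, ∫ ω,
          (if k + 1 ≤ t ∧ t < τ ω then h (x t ω) - h (xb t ω) else 0) ∂μ) :
    ∫ ω, (h (x k ω) + ∑ t ∈ Finset.Ico (k + 1) (τ ω), (h (x t ω) - h (xb t ω))) ∂μ = L := by
  classical
  -- basic integrability of bounded functionals of measurable maps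
  have hI : ∀ (g : Ω → ℝ), Measurable g → Integrable (fun ω => h (g ω)) μ := by
    intro g hg
    refine (integrable_const C).mono' ((hmeas.comp hg).aestronglyMeasurable) ?_
    filter_upwards with ω
    simpa [Real.norm_eq_abs] using hbd (g ω)
  set J : ℕ → ℝ := fun n => ∫ ω, h (x n ω) ∂μ with hJ
  -- the summand functions
  set f : ℕ → Ω → ℝ := fun t ω =>
    if k + 1 ≤ t ∧ t < τ ω then h (x t ω) - h (xb t ω) else 0 with hf
  -- pointwise identification
  have hf_eq : ∀ t, k + 1 ≤ t → f t = fun ω => h (x t ω) - h (xb t ω) := by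
    intro t ht
    funext ω
    by_cases hlt : t < τ ω
    · simp [hf, ht, hlt]; intro h2; omega
    · have : x t ω = xb t ω := hmeet ω t (le_of_not_gt hlt)
      simp [hf, ht, hlt, this]
  have hf_zero : ∀ t, t ≤ k → f t = fun _ => (0 : ℝ) := by
    intro t ht
    funext ω
    have : ¬ (k + 1 ≤ t) := by omega
    simp [hf, this]; intro h1 _; omega
  have hf_int : ∀ t, Integrable (f t) μ := by
    intro t
    by_cases ht : k + 1 ≤ t
    · rw [hf_eq t ht]; exact (hI _ (hxm t)).sub (hI _ (hxbm t))
    · rw [hf_zero t (by omega)]; exact integrable_const 0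
  set a : ℕ → ℝ := fun t => ∫ ω, f t ω ∂μ with ha
  -- value of a t for t ≥ k+1 : telescoping increments
  have ha_eq : ∀ t, k + 1 ≤ t → a t = J t - J (t - 1) := by
    intro t ht
    have h1 : a t = ∫ ω, (h (x t ω) - h (xb t ω)) ∂μ := by rw [ha]; simp only; rw [hf_eq t ht]
    have h2 : (∫ ω, h (xb t ω) ∂μ) = J (t - 1) := by
      rw [hJ]
      simp only
      rw [← integral_map (hxbm t).aemeasurable hmeas.aestronglyMeasurable,
        ← hid t (by omega), integral_map (hxm (t-1)).aemeasurable hmeas.aestronglyMeasurable]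
    rw [h1, integral_sub (hI _ (hxm t)) (hI _ (hxbm t)), h2, hJ]
  have ha_zero : ∀ t, t ≤ k → a t = 0 := by
    intro t ht
    rw [ha]; simp only; rw [hf_zero t ht]; simp
  -- Summability of a
  have hfabs_int : ∀ t, Integrable (fun ω => |f t ω|) μ := fun t => (hf_int t).abs
  have hb_sum : Summable (fun t => ∫ ω, |f t ω| ∂μ) := by
    apply summable_of_sum_range_le (c := ∫ ω, ∑ t ∈ Finset.Ico (k + 1) (τ ω),
        |h (x t ω) - h (xb t ω)| ∂μ)
    · intro t; positivity
    · intro N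
      rw [← integral_finset_sum _ (fun t _ => hfabs_int t)]
      apply integral_mono (integrable_finset_sum _ (fun t _ => hfabs_int t)) habs
      intro ω
      have hpt : ∀ t, |f t ω| = if t ∈ Finset.Ico (k + 1) (τ ω)
          then |h (x t ω) - h (xb t ω)| else 0 := by
        intro t
        rw [hf]
        simp only [Finset.mem_Ico]
        split <;> simp
      calc ∑ t ∈ Finset.range N, |f t ω|
          = ∑ t ∈ Finset.range N ∩ Finset.Ico (k + 1) (τ ω),
              |h (x t ω) - h (xb t ω)| := by
            rw [← Finset.sum_ite_mem]
            exact Finset.sum_congr rfl (fun t _ => hpt t)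
        _ ≤ ∑ t ∈ Finset.Ico (k + 1) (τ ω), |h (x t ω) - h (xb t ω)| :=
            Finset.sum_le_sum_of_subset_of_nonneg (Finset.inter_subset_right)
              (fun t _ _ => abs_nonneg _)
  have ha_sum : Summable a := by
    apply Summable.of_norm_bounded hb_sum
    intro t
    simpa [Real.norm_eq_abs] using norm_integral_le_integral_norm (f t) (μ := μ)
  -- partial sums telescope
  have hps : ∀ N, ∑ t ∈ Finset.range (N + (k + 1)), a t = J (N + k) - J k := by
    intro N
    induction N with
    | zero =>
      simp only [Nat.zero_add, Nat.zero_eq]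
      have : ∀ t ∈ Finset.range (k + 1), a t = 0 := by
        intro t ht
        exact ha_zero t (by simpa using Nat.lt_succ_iff.mp (Finset.mem_range.mp ht))
      rw [Finset.sum_congr rfl this]
      simp
    | succ N ih =>
      have : N + 1 + (k + 1) = (N + (k + 1)) + 1 := by omega
      rw [this, Finset.sum_range_succ, ih, ha_eq (N + (k + 1)) (by omega)]
      have h1 : N + (k + 1) = N + 1 + k := by omega
      have h2 : N + (k + 1) - 1 = N + k := by omega
      rw [h1] at h2 ⊢
      rw [h2]
      ring
  -- limit of partial sums
  have hlim : Tendsto (fun N => ∑ t ∈ Finset.range (N + (k + 1)), a t) atTop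
      (nhds (L - J k)) := by
    have h1 : Tendsto (fun N => J (N + k)) atTop (nhds L) :=
      hconv.comp (tendsto_add_atTop_nat k)
    have := h1.sub (tendsto_const_nhds (x := J k))
    refine this.congr (fun N => (hps N).symm)
  have hlim' : Tendsto (fun N => ∑ t ∈ Finset.range (N + (k + 1)), a t) atTop
      (nhds (∑' t, a t)) :=
    ha_sum.hasSum.tendsto_sum_nat.comp (tendsto_add_atTop_nat (k + 1))
  have htsum : ∑' t, a t = L - J k := tendsto_nhds_unique hlim' hlim
  -- assemble
  have hk_int : Integrable (fun ω => h (x k ω)) μ := hI _ (hxm k)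
  have hsum_int : Integrable
      (fun ω => ∑ t ∈ Finset.Ico (k + 1) (τ ω), (h (x t ω) - h (xb t ω))) μ := by
    have := hint.sub hk_int
    refine this.congr ?_
    filter_upwards with ω
    simp
  rw [integral_add hk_int hsum_int, hswap]
  have : (∑' t : ℕ, ∫ ω,
      (if k + 1 ≤ t ∧ t < τ ω then h (x t ω) - h (xb t ω) else 0) ∂μ) = ∑' t, a t := rfl
  rw [this, htsum, hJ]
  ring
end

section
/- For integers k ≤ l and random sequences x(t), x̄(t) meeting at time τ (with x(t) = x̄(t) for t ≥ τ), the average of the estimators ĥ_q = h(x(q)) + ∑_{t=q+1}^{τ-1} [h(x(t)) - h(x̄(t))] over q = k, ..., l satisfies the identity (1/(l-k+1)) ∑_{q=k}^l ĥ_q = (1/(l-k+1)) ∑_{t=k}^l h(x(t)) + ∑_{t=k+1}^{τ-1} [min(l-k+1, t-k)/(l-k+1)] · [h(x(t)) - h(x̄(t))]. -/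
/-- Time-averaged unbiased estimator identity: averaging the Glynn–Rhee estimators
`ĥ_q` over `q = k,…,l` gives an ergodic average plus a weighted bias correction. -/
theorem stmt12 {A : Type*} (x xb : ℕ → A) (h : A → ℝ)
    (τ : ℕ) (hτ1 : 1 ≤ τ) (hmeet : ∀ t : ℕ, τ ≤ t → x t = xb t)
    (k l : ℕ) (hkl : k ≤ l) :
    (1 / ((l : ℝ) - k + 1)) *
        ∑ q ∈ Finset.Icc k l,
          (h (x q) + ∑ t ∈ Finset.Ico (q + 1) τ, (h (x t) - h (xb t)))
      = (1 / ((l : ℝ) - k + 1)) * ∑ t ∈ Finset.Icc k l, h (x t)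
        + ∑ t ∈ Finset.Ico (k + 1) τ,
            ((min (l - k + 1) (t - k) : ℕ) : ℝ) / ((l : ℝ) - k + 1) *
              (h (x t) - h (xb t)) := by
  set f : ℕ → ℝ := fun t => h (x t) - h (xb t) with hf
  have key : ∑ q ∈ Finset.Icc k l, ∑ t ∈ Finset.Ico (q + 1) τ, f t
      = ∑ t ∈ Finset.Ico (k + 1) τ, ((min (l - k + 1) (t - k) : ℕ) : ℝ) * f t := by
    have h1 : ∀ q ∈ Finset.Icc k l, ∑ t ∈ Finset.Ico (q + 1) τ, f t
        = ∑ t ∈ Finset.Ico (k + 1) τ, if q + 1 ≤ t then f t else 0 := by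
      intro q hq
      simp only [Finset.mem_Icc] at hq
      rw [Finset.sum_ite, Finset.sum_const_zero, add_zero]
      congr 1
      ext t
      simp only [Finset.mem_filter, Finset.mem_Ico]
      omega
    rw [Finset.sum_congr rfl h1, Finset.sum_comm]
    refine Finset.sum_congr rfl fun t ht => ?_
    simp only [Finset.mem_Ico] at ht
    rw [Finset.sum_ite, Finset.sum_const_zero, add_zero, Finset.sum_const,
      nsmul_eq_mul]
    congr 1
    have : (Finset.Icc k l).filter (fun q => q + 1 ≤ t) = Finset.Icc k (min l (t - 1)) := by
      ext q
      simp only [Finset.mem_filter, Finset.mem_Icc]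
      omega
    rw [this, Nat.card_Icc]
    congr 1
    omega
  have hA : ∑ q ∈ Finset.Icc k l,
      (h (x q) + ∑ t ∈ Finset.Ico (q + 1) τ, f t)
      = ∑ t ∈ Finset.Icc k l, h (x t)
        + ∑ t ∈ Finset.Ico (k + 1) τ, ((min (l - k + 1) (t - k) : ℕ) : ℝ) * f t := by
    rw [Finset.sum_add_distrib, key]
  rw [hA, mul_add]
  congr 1
  rw [Finset.mul_sum]
  refine Finset.sum_congr rfl fun t ht => ?_
  ring
end
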